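/- Let a₁, a₂, a₃, a₄ be real numbers. All complex roots of the quartic polynomial p(λ) = λ⁴ + a₁λ³ + a₂λ² + a₃λ + a₄ have negative real part if and only if a₁ > 0, a₂ > 0, a₃ > 0, a₄ > 0 and H < 0, where H := a₁²a₄ + a₃² − a₁a₂a₃. -/
import Mathlib

open Polynomial in
private lemma rh_exists_root_quartic (a₁ a₂ a₃ a₄ : ℂ) :
    ∃ z : ℂ, z^4 + a₁*z^3 + a₂*z^2 + a₃*z + a₄ = 0 := by
  have h : (0:WithBot ℕ) < (X^4 + C a₁*X^3 + C a₂*X^2 + C a₃*X + C a₄ : ℂ[X]).degree := by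
    have : (X^4 + C a₁*X^3 + C a₂*X^2 + C a₃*X + C a₄ : ℂ[X]).degree = 4 := by
      compute_degree!
    rw [this]; norm_num
  obtain ⟨z, hz⟩ := Complex.exists_root h
  exact ⟨z, by simpa [Polynomial.IsRoot] using hz⟩

open Polynomial in
private lemma rh_exists_root_cubic (a₁ a₂ a₃ : ℂ) :
    ∃ z : ℂ, z^3 + a₁*z^2 + a₂*z + a₃ = 0 := by
  have h : (0:WithBot ℕ) < (X^3 + C a₁*X^2 + C a₂*X + C a₃ : ℂ[X]).degree := by
    have : (X^3 + C a₁*X^2 + C a₂*X + C a₃ : ℂ[X]).degree = 3 := by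
      compute_degree!
    rw [this]; norm_num
  obtain ⟨z, hz⟩ := Complex.exists_root h
  exact ⟨z, by simpa [Polynomial.IsRoot] using hz⟩

/-- If a real quartic has a nonreal complex root, we can split off the corresponding
real quadratic factor. -/
private lemma rh_case1 (a₁ a₂ a₃ a₄ : ℝ) (r : ℂ)
    (hr : r^4 + (a₁:ℂ)*r^3 + (a₂:ℂ)*r^2 + (a₃:ℂ)*r + (a₄:ℂ) = 0) (him : r.im ≠ 0) :
    ∃ b c d e : ℝ, a₁ = b + d ∧ a₂ = c + e + b*d ∧ a₃ = b*e + c*d ∧ a₄ = c*e := by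
  set x := r.re with hx
  set y := r.im with hy
  have hq : r^2 + ((-2*x : ℝ):ℂ)*r + ((x^2+y^2 : ℝ):ℂ) = 0 := by
    rw [← Complex.re_add_im r]
    push_cast
    linear_combination (y:ℂ)^2 * Complex.I_sq
  set b : ℝ := -2*x with hb
  set c : ℝ := x^2+y^2 with hc
  set d : ℝ := a₁ - b with hd
  set e : ℝ := a₂ - c - b*d with he
  have h1 : a₁ = b + d := by rw [hd]; ring
  have h2 : a₂ = c + e + b*d := by rw [he]; ring
  have h1c : (a₁:ℂ) = (b:ℂ) + (d:ℂ) := by exact_mod_cast h1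
  have h2c : (a₂:ℂ) = (c:ℂ) + (e:ℂ) + (b:ℂ)*(d:ℂ) := by exact_mod_cast h2
  have hmain : ((a₃ - (b*e + c*d) : ℝ):ℂ)*r + ((a₄ - c*e : ℝ):ℂ) = 0 := by
    push_cast
    linear_combination hr - (r^2 + ((d:ℝ):ℂ)*r + ((e:ℝ):ℂ)) * hq - r^3 * h1c - r^2 * h2c
  have him' := congrArg Complex.im hmain
  simp [Complex.add_im, Complex.mul_im] at him'
  have hα : a₃ - (b*e + c*d) = 0 := by
    rcases him' with h | h
    · exact h
    · exact absurd h him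
  have hre' := congrArg Complex.re hmain
  simp [Complex.add_re, Complex.mul_re, hα] at hre'
  exact ⟨b, c, d, e, h1, h2, by linarith, by linarith⟩

/-- Every real monic quartic factors into two real monic quadratics
(stated at the level of coefficients). -/
private lemma rh_factor_exists (a₁ a₂ a₃ a₄ : ℝ) :
    ∃ b c d e : ℝ, a₁ = b + d ∧ a₂ = c + e + b*d ∧ a₃ = b*e + c*d ∧ a₄ = c*e := by
  obtain ⟨r, hr⟩ := rh_exists_root_quartic (a₁:ℂ) a₂ a₃ a₄
  by_cases him : r.im = 0
  · have hrt : r = ((r.re : ℝ):ℂ) := Complex.ext rfl (by simp [him])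
    set t := r.re with ht
    rw [hrt] at hr
    have hE1 : t^4 + a₁*t^3 + a₂*t^2 + a₃*t + a₄ = 0 := by exact_mod_cast hr
    obtain ⟨w, hw⟩ := rh_exists_root_cubic ((a₁+t : ℝ):ℂ) ((a₂+a₁*t+t^2 : ℝ):ℂ)
      ((a₃+a₂*t+a₁*t^2+t^3 : ℝ):ℂ)
    by_cases him2 : w.im = 0
    · have hws : w = ((w.re : ℝ):ℂ) := Complex.ext rfl (by simp [him2])
      set s := w.re with hs
      rw [hws] at hw
      have hE2 : s^3 + (a₁+t)*s^2 + (a₂+a₁*t+t^2)*s + (a₃+a₂*t+a₁*t^2+t^3) = 0 := by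
        exact_mod_cast hw
      refine ⟨-(t+s), t*s, a₁+t+s, a₂+a₁*t+t^2+(a₁+t)*s+s^2, by ring, by ring, ?_, ?_⟩
      · linear_combination hE2
      · linear_combination hE1 - t*hE2
    · have hwq : w^4 + (a₁:ℂ)*w^3 + (a₂:ℂ)*w^2 + (a₃:ℂ)*w + (a₄:ℂ) = 0 := by
        have hE1c : (t:ℂ)^4 + (a₁:ℂ)*(t:ℂ)^3 + (a₂:ℂ)*(t:ℂ)^2 + (a₃:ℂ)*(t:ℂ) + (a₄:ℂ) = 0 := by
          exact_mod_cast hE1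
        push_cast at hw
        linear_combination (w - (t:ℂ)) * hw + hE1c
      exact rh_case1 a₁ a₂ a₃ a₄ w hwq him2
  · exact rh_case1 a₁ a₂ a₃ a₄ r hr him

/-- A real monic quadratic with positive coefficients is stable. -/
private lemma rh_quad_neg_root (b c : ℝ) (hb : 0 < b) (hc : 0 < c) :
    ∀ z : ℂ, z^2 + (b:ℂ)*z + (c:ℂ) = 0 → z.re < 0 := by
  intro z hz
  by_cases him : z.im = 0
  · have hzr : z = (z.re : ℂ) := Complex.ext rfl (by simp [him])
    rw [hzr] at hz
    have hre : z.re^2 + b*z.re + c = 0 := by exact_mod_cast hz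
    by_contra h
    push_neg at h
    nlinarith [sq_nonneg z.re]
  · have hconj : (starRingEnd ℂ z)^2 + (b:ℂ)*(starRingEnd ℂ z) + (c:ℂ) = 0 := by
      have := congrArg (starRingEnd ℂ) hz
      simpa using this
    have hne : z - starRingEnd ℂ z ≠ 0 := by
      intro h
      apply him
      have := sub_eq_zero.mp h
      have h2 := congrArg Complex.im this
      simp [Complex.conj_im] at h2
      linarith
    have hfac : (z - starRingEnd ℂ z) * (z + starRingEnd ℂ z + (b:ℂ)) = 0 := by
      linear_combination hz - hconj
    have hsum : z + starRingEnd ℂ z + (b:ℂ) = 0 := by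
      rcases mul_eq_zero.mp hfac with h | h
      · exact absurd h hne
      · exact h
    have := congrArg Complex.re hsum
    simp [Complex.add_re, Complex.conj_re] at this
    linarith

/-- Conversely, a stable real monic quadratic has positive coefficients. -/
private lemma rh_quad_root_neg (b c : ℝ)
    (h : ∀ z : ℂ, z^2 + (b:ℂ)*z + (c:ℂ) = 0 → z.re < 0) : 0 < b ∧ 0 < c := by
  by_cases hd : b^2 - 4*c ≥ 0
  · have hs2 : (Real.sqrt (b^2-4*c))^2 = b^2 - 4*c := Real.sq_sqrt hd
    set s := Real.sqrt (b^2 - 4*c) with hs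
    have hsnn : 0 ≤ s := Real.sqrt_nonneg _
    have hs2c : ((s:ℂ))^2 = (b:ℂ)^2 - 4*(c:ℂ) := by exact_mod_cast hs2
    have h1 := h (((-b + s)/2 : ℝ) : ℂ) (by push_cast; linear_combination (1/4 : ℂ) * hs2c)
    have h2 := h (((-b - s)/2 : ℝ) : ℂ) (by push_cast; linear_combination (1/4 : ℂ) * hs2c)
    simp only [Complex.ofReal_re] at h1 h2
    constructor
    · linarith
    · nlinarith
  · push_neg at hd
    have hpos : 0 < 4*c - b^2 := by linarith
    have hs2 : (Real.sqrt (4*c-b^2))^2 = 4*c - b^2 := Real.sq_sqrt (by linarith)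
    set s := Real.sqrt (4*c - b^2) with hs
    have hs2c : ((s:ℂ))^2 = 4*(c:ℂ) - (b:ℂ)^2 := by exact_mod_cast hs2
    have h1 := h ((((-b : ℝ)):ℂ)/2 + (s:ℂ)/2 * Complex.I) (by
      push_cast
      linear_combination ((s:ℂ)^2/4) * Complex.I_sq - (1/4:ℂ) * hs2c)
    have : ((((-b : ℝ)):ℂ)/2 + (s:ℂ)/2 * Complex.I).re = -b/2 := by simp
    rw [this] at h1
    constructor
    · linarith
    · nlinarith [sq_nonneg b]

/-- Routh–Hurwitz criterion for a real quartic: all complex roots of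
`λ⁴ + a₁λ³ + a₂λ² + a₃λ + a₄` have negative real part iff
`a₁ > 0`, `a₂ > 0`, `a₃ > 0`, `a₄ > 0` and `H := a₁²a₄ + a₃² − a₁a₂a₃ < 0`. -/
theorem quartic_hurwitz_criterion (a₁ a₂ a₃ a₄ : ℝ) :
    (∀ z : ℂ, z ^ 4 + (a₁ : ℂ) * z ^ 3 + (a₂ : ℂ) * z ^ 2 + (a₃ : ℂ) * z + (a₄ : ℂ) = 0 →
      z.re < 0) ↔
    (0 < a₁ ∧ 0 < a₂ ∧ 0 < a₃ ∧ 0 < a₄ ∧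
      a₁ ^ 2 * a₄ + a₃ ^ 2 - a₁ * a₂ * a₃ < 0) := by
  obtain ⟨b, c, d, e, h1, h2, h3, h4⟩ := rh_factor_exists a₁ a₂ a₃ a₄
  subst h1; subst h2; subst h3; subst h4
  have h1c : ((b + d : ℝ):ℂ) = (b:ℂ) + (d:ℂ) := by push_cast; ring
  have h2c : ((c + e + b*d : ℝ):ℂ) = (c:ℂ) + (e:ℂ) + (b:ℂ)*(d:ℂ) := by push_cast; ring
  have h3c : ((b*e + c*d : ℝ):ℂ) = (b:ℂ)*(e:ℂ) + (c:ℂ)*(d:ℂ) := by push_cast; ring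
  have h4c : ((c*e : ℝ):ℂ) = (c:ℂ)*(e:ℂ) := by push_cast; ring
  constructor
  · intro h
    have hbc : 0 < b ∧ 0 < c := by
      apply rh_quad_root_neg
      intro z hz
      apply h
      rw [h1c, h2c, h3c, h4c]
      linear_combination (z^2 + (d:ℂ)*z + (e:ℂ)) * hz
    have hde : 0 < d ∧ 0 < e := by
      apply rh_quad_root_neg
      intro z hz
      apply h
      rw [h1c, h2c, h3c, h4c]
      linear_combination (z^2 + (b:ℂ)*z + (c:ℂ)) * hz
    obtain ⟨hb, hc⟩ := hbc
    obtain ⟨hd, he⟩ := hde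
    refine ⟨by linarith, by positivity, by positivity, by positivity, ?_⟩
    nlinarith [mul_pos (mul_pos hb hd) (add_pos_of_nonneg_of_pos (sq_nonneg (c-e))
      (mul_pos (add_pos hb hd) (add_pos (mul_pos hb he) (mul_pos hc hd))))]
  · rintro ⟨p1, p2, p3, p4, p5⟩
    have hK : 0 < (c-e)^2 + (b+d)*(b*e+c*d) :=
      add_pos_of_nonneg_of_pos (sq_nonneg (c-e)) (mul_pos p1 p3)
    have hbd : 0 < b*d := by
      by_contra h
      push_neg at h
      nlinarith [mul_nonpos_of_nonpos_of_nonneg h hK.le]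
    have hb : 0 < b := by nlinarith
    have hd : 0 < d := by nlinarith
    have hc : 0 < c := by
      by_contra h
      push_neg at h
      have he' : e < 0 := by
        by_contra he'
        push_neg at he'
        nlinarith [mul_nonpos_of_nonpos_of_nonneg h he']
      have h6 : b*e < 0 := mul_neg_of_pos_of_neg hb he'
      have h7 : c*d ≤ 0 := mul_nonpos_of_nonpos_of_nonneg h hd.le
      linarith
    have he : 0 < e := by
      by_contra h
      push_neg at h
      nlinarith [mul_nonpos_of_nonneg_of_nonpos hc.le h]
    intro z hz
    rw [h1c, h2c, h3c, h4c] at hz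
    have hfac : (z^2 + (b:ℂ)*z + (c:ℂ)) * (z^2 + (d:ℂ)*z + (e:ℂ)) = 0 := by
      linear_combination hz
    rcases mul_eq_zero.mp hfac with hq | hq
    · exact rh_quad_neg_root b c hb hc z hq
    · exact rh_quad_neg_root d e hd he z hq
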